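/- Guessing-probability bound on the recycled basis key: in an execution of the authentication protocol, if Θ′ equals a fresh uniform sample from C when Bob rejects (D=0) and equals Θ when he accepts (D=1), then Guess(Θ′|T D C) ≤ 1/|C| + Guess(Θ|E), where T is the classical tag (independent of Θ given the rest by message-independence of the MAC), C is Eve's post-execution quantum system obtained by processing T, the transmitted qubits B∘, and E, and the qubits B∘ are in a maximally mixed state independent of (Θ, E). -/

import Mathlib

open Matrix BigOperators Kronecker
open scoped ComplexOrder

/-- Operator (spectral) norm of a complex matrix. -/
noncomputable def opNorm {E : Type} [Fintype E] [DecidableEq E] (A : Matrix E E ℂ) : ℝ :=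
  ‖(Matrix.toEuclideanCLM (𝕜 := ℂ) A : EuclideanSpace ℂ E →L[ℂ] EuclideanSpace ℂ E)‖

/-- An orthogonal projection. -/
def IsProjection {E : Type} [Fintype E] [DecidableEq E] (P : Matrix E E ℂ) : Prop :=
  P.IsHermitian ∧ P * P = P

/-- A cq-state, given as the family of (subnormalized) conditional operators
`ρ x = P_X(x) • ρ_E^x`; each is PSD and the traces sum to 1. -/
def IsCQState {X E : Type} [Fintype X] [Fintype E] (ρ : X → Matrix E E ℂ) : Prop :=
  (∀ x, (ρ x).PosSemidef) ∧ ∑ x, (ρ x).trace = 1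

/-- A POVM with outcomes in `X` on the system `E`. -/
def IsPOVM {X E : Type} [Fintype X] [Fintype E] [DecidableEq E] (M : X → Matrix E E ℂ) : Prop :=
  (∀ x, (M x).PosSemidef) ∧ ∑ x, M x = 1

/-- The guessing probability `Guess(X|E)` of the classical value of a cq-state:
the supremum over POVMs of the probability of the measurement outcome being `X`. -/
noncomputable def guessProb {X E : Type} [Fintype X] [Fintype E] [DecidableEq E]
    (ρ : X → Matrix E E ℂ) : ℝ :=
  sSup {g | ∃ M : X → Matrix E E ℂ, IsPOVM M ∧ g = (∑ x, (M x * ρ x).trace).re}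

/-- The guessing probability `Guess(X|ZE)` with additional classical side information `Z`:
the supremum over measurements of `E` controlled by `Z`. -/
noncomputable def guessProbC {X Z E : Type} [Fintype X] [Fintype Z] [Fintype E] [DecidableEq E]
    (ρ : X → Z → Matrix E E ℂ) : ℝ :=
  sSup {g | ∃ M : Z → X → Matrix E E ℂ, (∀ z, IsPOVM (M z)) ∧
    g = (∑ x, ∑ z, (M z x * ρ x z).trace).re}

/-- Trace norm `‖A‖₁ = tr √(AᴴA)`. -/
noncomputable def traceNorm {E : Type} [Fintype E] [DecidableEq E] (A : Matrix E E ℂ) : ℝ :=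
  (((Matrix.isHermitian_conjTranspose_mul_self A).eigenvectorUnitary.1 *
    Matrix.diagonal (((↑) : ℝ → ℂ) ∘ (Real.sqrt ·) ∘ (Matrix.isHermitian_conjTranspose_mul_self A).eigenvalues) *
    (star (Matrix.isHermitian_conjTranspose_mul_self A).eigenvectorUnitary : Matrix E E ℂ)).trace).re

/-- A CPTP map between matrix algebras: completely positive (all finite ampliations
are positivity-preserving) and trace-preserving. -/
def IsCPTP {E F : Type} [Fintype E] [DecidableEq E] [Fintype F] [DecidableEq F]
    (Q : Matrix E E ℂ →ₗ[ℂ] Matrix F F ℂ) : Prop :=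
  (∀ k : ℕ, ∀ ρ : Matrix (E × Fin k) (E × Fin k) ℂ, ρ.PosSemidef →
    (Matrix.of fun p q : F × Fin k =>
      Q (Matrix.of fun a b => ρ (a, p.2) (b, q.2)) p.1 q.1).PosSemidef) ∧
  ∀ ρ, (Q ρ).trace = ρ.trace

/-- The BB84 state vector `H^θ |x⟩` on `n` qubits. -/
noncomputable def bb84v {n : ℕ} (θ x : Fin n → ZMod 2) : (Fin n → ZMod 2) → ℂ :=
  fun y => ∏ i, (if θ i = 0 then (if y i = x i then 1 else 0)
    else ((-1 : ℂ) ^ ((x i).val * (y i).val) / Real.sqrt 2))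

/-- The rank-one projection `H^θ |x⟩⟨x| H^θ`. -/
noncomputable def bb84proj {n : ℕ} (θ x : Fin n → ZMod 2) :
    Matrix (Fin n → ZMod 2) (Fin n → ZMod 2) ℂ :=
  Matrix.vecMulVec (bb84v θ x) (fun y => star (bb84v θ x y))

/-- Partial trace over the first tensor factor. -/
noncomputable def ptr {A B : Type} [Fintype A] (M : Matrix (A × B) (A × B) ℂ) :
    Matrix B B ℂ :=
  Matrix.of fun b b' => ∑ a, M (a, b) (a, b')

/-- The Hamming ball of radius `φ·n` around `0` in `{0,1}^n`. -/
noncomputable def hammingBall (n : ℕ) (φ : ℝ) : Finset (Fin n → ZMod 2) :=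
  @Finset.filter _ (fun e => (hammingDist e (0 : Fin n → ZMod 2) : ℝ) ≤ φ * n)
    (Classical.decPred _) Finset.univ

/-- Binary entropy in bits. -/
noncomputable def binEnt (φ : ℝ) : ℝ := Real.binEntropy φ / Real.log 2

/-- Message-independence of a keyed hash function: the distribution of `H(K,x)` for
uniform `K` does not depend on `x`. -/
def MessageIndependent {K X Y : Type} [Fintype K] [DecidableEq Y] (H : K → X → Y) : Prop :=
  ∀ x x' y, (Finset.univ.filter fun k => H k x = y).card =
    (Finset.univ.filter fun k => H k x' = y).card

/-- Uniformity: `H(K,x)` is uniformly distributed on `Y`, independently of `x`. -/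
def UniformHash {K X Y : Type} [Fintype K] [Fintype Y] [DecidableEq Y] (H : K → X → Y) : Prop :=
  (∀ x x' y, (Finset.univ.filter fun k => H k x = y).card =
    (Finset.univ.filter fun k => H k x' = y).card) ∧
  ∀ x y, (Finset.univ.filter fun k => H k x = y).card * Fintype.card Y = Fintype.card K

/-- `δ(K, U_K | Y E)`: trace distance of a ccq-state `ρ_{KYE}` (classical `K`, `Y`) from the
corresponding state with `K` replaced by a fresh uniform key. -/
noncomputable def deltaKeyUniform {K Y E : Type} [Fintype K] [Fintype Y] [Fintype E]
    [DecidableEq E] (ρ : K → Y → Matrix E E ℂ) : ℝ :=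
  (1/2) * ∑ k : K, ∑ y : Y, traceNorm (ρ k y - (Fintype.card K : ℝ)⁻¹ • ∑ k', ρ k' y)

/-- `ν`-key-privacy of a keyed hash function `H`: for every state `ρ_{KXYE}` with
`ρ_{KX} = μ_K ⊗ ρ_X`, `Y = H(K,X)` and Markov chain `K ↔ XY ↔ E`,
the key is `ν/2·√(Guess(X|YE)·|Y|)`-close to uniform given `Y` and `E`. -/
def KeyPrivacy {K X Y : Type} [Fintype K] [Fintype X] [Fintype Y] [DecidableEq Y]
    (ν : ℝ) (H : K → X → Y) : Prop :=
  ∀ (E : Type) [Fintype E] [DecidableEq E], ∀ ρ : K → X → Matrix E E ℂ,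
    (∀ k x, (ρ k x).PosSemidef) →
    (∑ k, ∑ x, (ρ k x).trace) = 1 →
    (∀ k x, (ρ k x).trace = (Fintype.card K : ℂ)⁻¹ * ∑ k', (ρ k' x).trace) →
    (∃ (p : K → X → ℝ) (σ : X → Y → Matrix E E ℂ), (∀ k x, 0 ≤ p k x) ∧
      ∀ k x, ρ k x = p k x • σ x (H k x)) →
    deltaKeyUniform (fun k y => ∑ x, if H k x = y then ρ k x else 0) ≤
      (ν/2) * Real.sqrt (guessProbC (fun x y => ∑ k, if H k x = y then ρ k x else 0) *
        (Fintype.card Y))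

open scoped ComplexOrder

section Helpers
variable {n m : Type} [Fintype n] [DecidableEq n] [Fintype m] [DecidableEq m]

lemma psd_trace_nonneg {A : Matrix n n ℂ} (hA : A.PosSemidef) : 0 ≤ A.trace := by
  rw [Matrix.trace]
  apply Finset.sum_nonneg
  intro i _
  have h := hA.dotProduct_mulVec_nonneg (Pi.single i 1)
  simpa [dotProduct, Matrix.mulVec, Pi.single_apply, Finset.sum_ite_eq,
    Matrix.diag] using h

lemma psd_trace_mul_nonneg {A B : Matrix n n ℂ} (hA : A.PosSemidef) (hB : B.PosSemidef) :
    0 ≤ (A * B).trace := by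
  obtain ⟨k, w, rfl⟩ := Matrix.posSemidef_iff_eq_sum_vecMulVec.mp hB
  rw [Matrix.mul_sum, Matrix.trace_sum]
  refine Finset.sum_nonneg fun i _ => ?_
  have h := hA.dotProduct_mulVec_nonneg (w i)
  convert h using 1
  simp only [Matrix.trace, Matrix.diag, Matrix.mul_apply, Matrix.vecMulVec_apply, dotProduct,
    Matrix.mulVec, Pi.star_apply, Finset.mul_sum]
  exact Finset.sum_congr rfl fun a _ => Finset.sum_congr rfl fun b _ => by ring

lemma psd_trace_mul_re_nonneg {A B : Matrix n n ℂ} (hA : A.PosSemidef) (hB : B.PosSemidef) :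
    0 ≤ ((A * B).trace).re :=
  (Complex.nonneg_iff.mp (psd_trace_mul_nonneg hA hB)).1

lemma re_trace_mul_mono {A B ρ : Matrix n n ℂ} (hAB : (B - A).PosSemidef)
    (hρ : ρ.PosSemidef) : ((A * ρ).trace).re ≤ ((B * ρ).trace).re := by
  have h := psd_trace_mul_re_nonneg hAB hρ
  rw [Matrix.sub_mul, Matrix.trace_sub] at h
  simp only [Complex.sub_re] at h
  linarith

lemma kronecker_conjTranspose (A : Matrix n n ℂ) (B : Matrix m m ℂ) :
    (A ⊗ₖ B)ᴴ = Aᴴ ⊗ₖ Bᴴ := by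
  ext ⟨i, j⟩ ⟨k, l⟩
  simp [Matrix.conjTranspose_apply, Matrix.kroneckerMap_apply]

lemma psd_kronecker {A : Matrix n n ℂ} {B : Matrix m m ℂ}
    (hA : A.PosSemidef) (hB : B.PosSemidef) : (A ⊗ₖ B).PosSemidef := by
  exact hA.kronecker hB

lemma psd_sum {ι : Type*} (s : Finset ι) (f : ι → Matrix n n ℂ)
    (hf : ∀ i ∈ s, (f i).PosSemidef) : (∑ i ∈ s, f i).PosSemidef := by
  classical
  induction s using Finset.induction with
  | empty => simpa using Matrix.PosSemidef.zero
  | insert _ _ h ih =>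
    rw [Finset.sum_insert h]
    exact (hf _ (Finset.mem_insert_self _ _)).add
      (ih fun i hi => hf i (Finset.mem_insert_of_mem hi))

end Helpers

section Helpers2
variable {n m : Type} [Fintype n] [DecidableEq n] [Fintype m] [DecidableEq m]
set_option linter.unusedSectionVars false

lemma real_smul_matrix (r : ℝ) (X : Matrix n m ℂ) : r • X = (r : ℂ) • X := by
  ext i j
  simp [Matrix.smul_apply, Complex.real_smul]

noncomputable def hermPart (A : Matrix n n ℂ) : Matrix n n ℂ := (2:ℂ)⁻¹ • (A + Aᴴ)

lemma hermPart_isHermitian (A : Matrix n n ℂ) : (hermPart A).IsHermitian := by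
  unfold hermPart
  unfold Matrix.IsHermitian
  rw [Matrix.conjTranspose_smul, Matrix.conjTranspose_add, Matrix.conjTranspose_conjTranspose]
  rw [add_comm]
  congr 1
  simp

lemma form_conjTranspose (A : Matrix n n ℂ) (x : n → ℂ) :
    star x ⬝ᵥ Aᴴ *ᵥ x = starRingEnd ℂ (star x ⬝ᵥ A *ᵥ x) := by
  simp only [dotProduct, Matrix.mulVec, Matrix.conjTranspose_apply, Pi.star_apply,
    map_sum, Finset.mul_sum, RingHom.coe_coe, Complex.conj_conj, RCLike.star_def]
  rw [Finset.sum_comm]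
  apply Finset.sum_congr rfl; intro i _
  apply Finset.sum_congr rfl; intro j _
  rw [_root_.map_mul, _root_.map_mul, Complex.conj_conj]
  ring

lemma form_hermPart (A : Matrix n n ℂ) (x : n → ℂ) :
    star x ⬝ᵥ (hermPart A) *ᵥ x = ((star x ⬝ᵥ A *ᵥ x).re : ℂ) := by
  unfold hermPart
  rw [Matrix.smul_mulVec, Matrix.add_mulVec, dotProduct_smul,
    dotProduct_add, form_conjTranspose]
  rw [Complex.add_conj]
  rw [smul_eq_mul]
  ring_nf
  simp

lemma trace_hermPart_mul_re {A ρ : Matrix n n ℂ} (hρ : ρ.IsHermitian) :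
    ((hermPart A * ρ).trace).re = ((A * ρ).trace).re := by
  unfold hermPart
  have h1 : Aᴴ * ρ = (ρ * A)ᴴ := by
    rw [Matrix.conjTranspose_mul, hρ.eq]
  rw [Matrix.smul_mul, Matrix.add_mul, Matrix.trace_smul, Matrix.trace_add, h1,
    Matrix.trace_conjTranspose, Matrix.trace_mul_comm ρ A]
  set z := (A * ρ).trace
  have h2 : z + star z = ((2 * z.re : ℝ) : ℂ) := Complex.add_conj z
  rw [h2, smul_eq_mul]
  simp [Complex.ofReal_mul]

lemma trace_mul_vecMulVec (A : Matrix n n ℂ) (v : n → ℂ) :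
    (A * Matrix.vecMulVec v (star v)).trace = star v ⬝ᵥ A *ᵥ v := by
  simp only [Matrix.trace, Matrix.diag, Matrix.mul_apply, Matrix.vecMulVec_apply,
    dotProduct, Matrix.mulVec, Pi.star_apply]
  apply Finset.sum_congr rfl; intro i _
  rw [Finset.mul_sum]
  apply Finset.sum_congr rfl; intro j _
  ring

lemma psd_vecMulVec (v : n → ℂ) : (Matrix.vecMulVec v (star v)).PosSemidef := by
  refine Matrix.PosSemidef.of_dotProduct_mulVec_nonneg ?_ ?_
  · unfold Matrix.IsHermitian
    ext i j
    simp [Matrix.conjTranspose_apply, Matrix.vecMulVec_apply, mul_comm]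
  · intro x
    have h : star x ⬝ᵥ (Matrix.vecMulVec v (star v)) *ᵥ x
        = (star x ⬝ᵥ v) * star (star x ⬝ᵥ v) := by
      simp only [dotProduct, Matrix.mulVec, Matrix.vecMulVec_apply, Pi.star_apply,
        star_sum, star_mul', star_star, Finset.mul_sum, Finset.sum_mul]
      rw [Finset.sum_comm]
      apply Finset.sum_congr rfl; intro i _
      apply Finset.sum_congr rfl; intro j _
      ring
    rw [h]
    exact mul_star_self_nonneg _

lemma form_eq_trace (A : Matrix n n ℂ) (v : n → ℂ) :
    star v ⬝ᵥ A *ᵥ v = (A * Matrix.vecMulVec v (star v)).trace :=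
  (trace_mul_vecMulVec A v).symm

lemma hermitian_form_real {S : Matrix n n ℂ} (hS : S.IsHermitian) (v : n → ℂ) :
    star v ⬝ᵥ S *ᵥ v = ((star v ⬝ᵥ S *ᵥ v).re : ℂ) := by
  have h := form_conjTranspose S v
  rw [hS.eq] at h
  have him : (star v ⬝ᵥ S *ᵥ v).im = 0 := by
    have h2 := congrArg Complex.im h
    simp at h2
    linarith
  exact Complex.ext (by simp) (by simp [him])

end Helpers2

section Helpers3
set_option linter.unusedSectionVars false

lemma trace_ptr {A B : Type} [Fintype A] [Fintype B] (M : Matrix (A × B) (A × B) ℂ) :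
    (ptr M).trace = M.trace := by
  simp only [ptr, Matrix.trace, Matrix.diag, Matrix.of_apply, Fintype.sum_prod_type]
  exact Finset.sum_comm

lemma trace_mul_ptr {B2 Cc : Type} [Fintype B2] [DecidableEq B2] [Fintype Cc] [DecidableEq Cc]
    (A : Matrix B2 B2 ℂ) (Mm : Matrix Cc Cc ℂ) (X : Matrix (B2 × Cc) (B2 × Cc) ℂ) :
    (Mm * ptr ((A ⊗ₖ (1 : Matrix Cc Cc ℂ)) * X)).trace = ((A ⊗ₖ Mm) * X).trace := by
  simp only [Matrix.trace, Matrix.diag, Matrix.mul_apply, ptr, Matrix.of_apply,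
    Matrix.kroneckerMap_apply, Matrix.one_apply, Fintype.sum_prod_type, Finset.mul_sum,
    Finset.sum_mul, mul_ite, mul_zero, ite_mul, zero_mul, Finset.sum_ite_eq,
    Finset.sum_ite_eq', Finset.mem_univ, if_true]
  trans ∑ c : Cc, ∑ b : B2, ∑ c' : Cc, ∑ b'' : B2, Mm c c' * (A b b'' * 1 * X (b'', c') (b, c))
  · exact Finset.sum_congr rfl fun c _ => Finset.sum_comm
  trans ∑ b : B2, ∑ c : Cc, ∑ c' : Cc, ∑ b'' : B2, Mm c c' * (A b b'' * 1 * X (b'', c') (b, c))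
  · exact Finset.sum_comm
  refine Finset.sum_congr rfl fun b _ => Finset.sum_congr rfl fun c _ => ?_
  rw [Finset.sum_comm]
  refine Finset.sum_congr rfl fun b'' _ => Finset.sum_congr rfl fun c' _ => ?_
  ring

lemma cptp_pos {E F : Type} [Fintype E] [DecidableEq E] [Fintype F] [DecidableEq F]
    {Q : Matrix E E ℂ →ₗ[ℂ] Matrix F F ℂ} (hQ : IsCPTP Q) {ρ : Matrix E E ℂ}
    (hρ : ρ.PosSemidef) : (Q ρ).PosSemidef := by
  set ρ' : Matrix (E × Fin 1) (E × Fin 1) ℂ := Matrix.of fun p q => ρ p.1 q.1 with hρ'def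
  have hρ' : ρ'.PosSemidef := by
    refine Matrix.PosSemidef.of_dotProduct_mulVec_nonneg ?_ ?_
    · ext ⟨a, i⟩ ⟨b, j⟩
      simpa [ρ', Matrix.conjTranspose_apply] using hρ.1.apply a b
    · intro x
      have h := hρ.dotProduct_mulVec_nonneg (fun a => x (a, 0))
      simpa [ρ', dotProduct, Matrix.mulVec, Fintype.sum_prod_type,
        Fin.sum_univ_one] using h
  have hbig : (Matrix.of fun p q : F × Fin 1 => Q ρ p.1 q.1).PosSemidef := hQ.1 1 ρ' hρ'
  refine Matrix.PosSemidef.of_dotProduct_mulVec_nonneg ?_ ?_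
  · ext i j
    have h := hbig.1.apply (i, 0) (j, 0)
    simpa [Matrix.conjTranspose_apply] using h
  · intro v
    have h := hbig.dotProduct_mulVec_nonneg (fun p => v p.1)
    simpa [dotProduct, Matrix.mulVec, Fintype.sum_prod_type, Fin.sum_univ_one] using h

lemma kronecker_sum_right {n m : Type} [Fintype n] [Fintype m] {ι : Type*} (s : Finset ι)
    (A : Matrix n n ℂ) (f : ι → Matrix m m ℂ) :
    A ⊗ₖ (∑ i ∈ s, f i) = ∑ i ∈ s, A ⊗ₖ f i := by
  ext ⟨a, c⟩ ⟨b, d⟩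
  simp [Matrix.kroneckerMap_apply, Matrix.sum_apply, Finset.mul_sum]

lemma kronecker_smul_right {n m : Type} (A : Matrix n n ℂ) (c : ℂ) (B : Matrix m m ℂ) :
    A ⊗ₖ (c • B) = c • (A ⊗ₖ B) := by
  ext ⟨a, x⟩ ⟨b, y⟩
  simp [Matrix.kroneckerMap_apply]
  ring

lemma trace_mul_expand {n : Type} [Fintype n] (W ρ : Matrix n n ℂ) :
    (W * ρ).trace = ∑ a, ∑ b, W a b * ρ b a := by
  simp [Matrix.trace, Matrix.diag, Matrix.mul_apply]

/-- The pulled-back measurement operator on `E`. -/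
noncomputable def pullW {Bt E F : Type} [Fintype Bt] [DecidableEq Bt] [Fintype E]
    [DecidableEq E] [Fintype F] [DecidableEq F]
    (Q : Matrix (Bt × E) (Bt × E) ℂ →ₗ[ℂ] Matrix F F ℂ) (G : Matrix F F ℂ) (κ : ℂ) :
    Matrix E E ℂ :=
  Matrix.of fun a b => κ * (G * Q ((1 : Matrix Bt Bt ℂ) ⊗ₖ Matrix.single b a (1:ℂ))).trace

lemma trace_pullW_mul {Bt E F : Type} [Fintype Bt] [DecidableEq Bt] [Fintype E]
    [DecidableEq E] [Fintype F] [DecidableEq F]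
    (Q : Matrix (Bt × E) (Bt × E) ℂ →ₗ[ℂ] Matrix F F ℂ) (G : Matrix F F ℂ) (κ : ℂ)
    (ρ : Matrix E E ℂ) :
    (pullW Q G κ * ρ).trace = κ * (G * Q ((1 : Matrix Bt Bt ℂ) ⊗ₖ ρ)).trace := by
  conv_rhs => rw [Matrix.matrix_eq_sum_single ρ]
  rw [trace_mul_expand]
  have hst : ∀ i j : E, Matrix.single i j (ρ i j) = ρ i j • Matrix.single i j (1:ℂ) := by
    intro i j; rw [Matrix.smul_single]; rw [smul_eq_mul, mul_one]
  calc ∑ a, ∑ b, pullW Q G κ a b * ρ b a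
      = ∑ b, ∑ a, ρ b a * (κ * (G * Q ((1 : Matrix Bt Bt ℂ) ⊗ₖ Matrix.single b a (1:ℂ))).trace) := by
        rw [Finset.sum_comm]
        exact Finset.sum_congr rfl fun a _ => Finset.sum_congr rfl fun b _ => by
          simp [pullW]; ring
    _ = κ * (G * Q ((1 : Matrix Bt Bt ℂ) ⊗ₖ ∑ i, ∑ j, Matrix.single i j (ρ i j))).trace := by
        simp only [kronecker_sum_right, map_sum, Matrix.mul_sum, Matrix.trace_sum,
          Finset.mul_sum]
        refine Finset.sum_congr rfl fun i _ => ?_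
        refine Finset.sum_congr rfl fun j _ => ?_
        rw [hst i j, kronecker_smul_right, _root_.map_smul, Matrix.mul_smul, Matrix.trace_smul,
          smul_eq_mul]
        ring

lemma sub_kronecker' {n m : Type} (A B : Matrix n n ℂ) (C : Matrix m m ℂ) :
    (A - B) ⊗ₖ C = A ⊗ₖ C - B ⊗ₖ C := by
  ext ⟨a, c⟩ ⟨b, d⟩
  simp [Matrix.kroneckerMap_apply, Matrix.sub_apply, sub_mul]

lemma ptr_smul {A B : Type} [Fintype A] (c : ℂ) (M : Matrix (A × B) (A × B) ℂ) :
    ptr (c • M) = c • ptr M := by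
  ext b b'
  simp [ptr, Finset.mul_sum]

lemma isHermitian_sum {n : Type} {ι : Type*} (s : Finset ι) (f : ι → Matrix n n ℂ)
    (hf : ∀ i ∈ s, (f i).IsHermitian) : (∑ i ∈ s, f i).IsHermitian := by
  unfold Matrix.IsHermitian
  rw [Matrix.conjTranspose_sum]
  exact Finset.sum_congr rfl fun i hi => (hf i hi).eq

lemma povm_le_one {X E : Type} [Fintype X] [DecidableEq X] [Fintype E] [DecidableEq E]
    {M : X → Matrix E E ℂ} (hM : IsPOVM M) (x : X) : ((1 : Matrix E E ℂ) - M x).PosSemidef := by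
  have h : (1 : Matrix E E ℂ) - M x = ∑ y ∈ Finset.univ.erase x, M y := by
    rw [← hM.2, ← Finset.add_sum_erase _ _ (Finset.mem_univ x)]
    abel
  rw [h]
  exact psd_sum _ _ fun y _ => hM.1 y

lemma guessProb_mem_le_one {X E : Type} [Fintype X] [DecidableEq X] [Fintype E] [DecidableEq E]
    {ρ : X → Matrix E E ℂ} (hρ : IsCQState ρ) {M : X → Matrix E E ℂ} (hM : IsPOVM M) :
    (∑ x, (M x * ρ x).trace).re ≤ 1 := by
  rw [Complex.re_sum]
  have hb : ∀ x, ((M x * ρ x).trace).re ≤ ((ρ x).trace).re := by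
    intro x
    have h := re_trace_mul_mono (povm_le_one hM x) (hρ.1 x)
    rwa [Matrix.one_mul] at h
  calc ∑ x, ((M x * ρ x).trace).re ≤ ∑ x, ((ρ x).trace).re :=
        Finset.sum_le_sum fun x _ => hb x
    _ = 1 := by rw [← Complex.re_sum, hρ.2, Complex.one_re]

lemma guessProb_bddAbove {X E : Type} [Fintype X] [DecidableEq X] [Fintype E] [DecidableEq E]
    {ρ : X → Matrix E E ℂ} (hρ : IsCQState ρ) :
    BddAbove {g | ∃ M : X → Matrix E E ℂ, IsPOVM M ∧ g = (∑ x, (M x * ρ x).trace).re} := by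
  refine ⟨1, ?_⟩
  rintro g ⟨M, hM, rfl⟩
  exact guessProb_mem_le_one hρ hM

lemma guessProb_nonneg {X E : Type} [Fintype X] [DecidableEq X] [Fintype E] [DecidableEq E]
    {ρ : X → Matrix E E ℂ} (hρ : IsCQState ρ) : 0 ≤ guessProb ρ := by
  apply Real.sSup_nonneg
  rintro g ⟨M, hM, rfl⟩
  rw [Complex.re_sum]
  exact Finset.sum_nonneg fun x _ => psd_trace_mul_re_nonneg (hM.1 x) (hρ.1 x)

end Helpers3

set_option maxHeartbeats 1000000 in
/-- guessing-probability bound on the recycled basis key. `Θ'` is a fresh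
uniform element of `C` if Bob rejects (`d = 0`) and equals `Θ` if he accepts (`d = 1`);
the tag `T` is independent of `(Θ, B∘, E)`, the qubits `B∘` are maximally mixed and
independent of `(Θ, E)`, Eve processes `(T, B∘, E)` by CPTP maps, and Bob measures his
received system with a POVM controlled by `(Θ, T)`.  Then
`Guess(Θ'|T D C) ≤ 1/|C| + Guess(Θ|E)`. -/
theorem recycled_basis_key_guess {𝒞 T E B B2 Cc : Type}
    [Fintype 𝒞] [DecidableEq 𝒞] [Fintype T] [DecidableEq T]
    [Fintype E] [DecidableEq E] [Fintype B] [DecidableEq B]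
    [Fintype B2] [DecidableEq B2] [Fintype Cc] [DecidableEq Cc]
    (ρΘE : 𝒞 → Matrix E E ℂ) (hρ : IsCQState ρΘE)
    (pT : T → ℝ) (hpT : ∀ t, 0 ≤ pT t) (hpT1 : ∑ t, pT t = 1)
    (Q : T → (Matrix (B × E) (B × E) ℂ →ₗ[ℂ] Matrix (B2 × Cc) (B2 × Cc) ℂ))
    (hQ : ∀ t, IsCPTP (Q t))
    (V : 𝒞 → T → Fin 2 → Matrix B2 B2 ℂ) (hV : ∀ θ t, IsPOVM (V θ t)) :
    guessProbC (fun (θ' : 𝒞) (td : T × Fin 2) =>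
        if td.2 = 1 then
          ptr ((V θ' td.1 1 ⊗ₖ (1 : Matrix Cc Cc ℂ)) *
            Q td.1 ((pT td.1 * (Fintype.card B : ℝ)⁻¹) • ((1 : Matrix B B ℂ) ⊗ₖ ρΘE θ')))
        else
          (Fintype.card 𝒞 : ℝ)⁻¹ • ∑ θ : 𝒞,
            ptr ((V θ td.1 0 ⊗ₖ (1 : Matrix Cc Cc ℂ)) *
              Q td.1 ((pT td.1 * (Fintype.card B : ℝ)⁻¹) •
                ((1 : Matrix B B ℂ) ⊗ₖ ρΘE θ)))) ≤
      (Fintype.card 𝒞 : ℝ)⁻¹ + guessProb ρΘE := by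
  classical
  have hρ1 : ∀ θ, (ρΘE θ).PosSemidef := hρ.1
  have htr1 : ∑ θ, ((ρΘE θ).trace).re = 1 := by
    rw [← Complex.re_sum, hρ.2, Complex.one_re]
  have htrnn : ∀ θ, 0 ≤ ((ρΘE θ).trace).re := fun θ =>
    (Complex.nonneg_iff.mp (psd_trace_nonneg (hρ1 θ))).1
  have hgnn : 0 ≤ guessProb ρΘE := guessProb_nonneg hρ
  have hRHS : 0 ≤ (Fintype.card 𝒞 : ℝ)⁻¹ + guessProb ρΘE := by positivity
  apply Real.sSup_le _ hRHS
  rintro g ⟨M, hM, rfl⟩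
  rcases isEmpty_or_nonempty 𝒞 with h𝒞 | h𝒞
  · simpa using hRHS
  obtain ⟨θ₀⟩ := h𝒞
  set κ : ℝ := (Fintype.card B : ℝ)⁻¹ with hκdef
  have hκnn : 0 ≤ κ := by positivity
  have hκB : κ * (Fintype.card B : ℝ) ≤ 1 := by
    rcases Nat.eq_zero_or_pos (Fintype.card B) with h | h
    · simp [hκdef, h]
    · rw [hκdef, inv_mul_cancel₀ (by exact_mod_cast h.ne')]
  set Y : T → 𝒞 → Matrix (B2 × Cc) (B2 × Cc) ℂ :=
    fun t θ => Q t ((1 : Matrix B B ℂ) ⊗ₖ ρΘE θ) with hYdef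
  have hYpsd : ∀ t θ, (Y t θ).PosSemidef := fun t θ =>
    cptp_pos (hQ t) (psd_kronecker Matrix.PosSemidef.one (hρ1 θ))
  have hYtrre : ∀ t θ, ((Y t θ).trace).re = (Fintype.card B : ℝ) * ((ρΘE θ).trace).re := by
    intro t θ
    rw [hYdef]
    show ((Q t ((1 : Matrix B B ℂ) ⊗ₖ ρΘE θ)).trace).re = _
    rw [(hQ t).2, Matrix.trace_kronecker, Matrix.trace_one]
    rw [show ((Fintype.card B : ℂ)) = (((Fintype.card B : ℝ)) : ℂ) by push_cast; rfl]
    exact Complex.re_ofReal_mul _ _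
  have hQs : ∀ (t : T) (θ : 𝒞), Q t ((pT t * κ) • ((1 : Matrix B B ℂ) ⊗ₖ ρΘE θ))
      = ((pT t * κ : ℝ) : ℂ) • Y t θ := by
    intro t θ
    rw [real_smul_matrix, _root_.map_smul, hYdef]
  -- split the sum into the d = 0 and d = 1 parts
  have h01 : ((0 : Fin 2) = 1) = False := by decide
  rw [show (∑ x : 𝒞, ∑ z : T × Fin 2,
      (M z x * (if z.2 = 1 then
          ptr ((V x z.1 1 ⊗ₖ (1 : Matrix Cc Cc ℂ)) *
            Q z.1 ((pT z.1 * κ) • ((1 : Matrix B B ℂ) ⊗ₖ ρΘE x)))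
        else
          (Fintype.card 𝒞 : ℝ)⁻¹ • ∑ θ : 𝒞,
            ptr ((V θ z.1 0 ⊗ₖ (1 : Matrix Cc Cc ℂ)) *
              Q z.1 ((pT z.1 * κ) • ((1 : Matrix B B ℂ) ⊗ₖ ρΘE θ))))).trace)
      = (∑ x : 𝒞, ∑ t : T,
          (M (t, 0) x * ((Fintype.card 𝒞 : ℝ)⁻¹ • ∑ θ : 𝒞,
            ptr ((V θ t 0 ⊗ₖ (1 : Matrix Cc Cc ℂ)) *
              Q t ((pT t * κ) • ((1 : Matrix B B ℂ) ⊗ₖ ρΘE θ))))).trace)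
        + (∑ x : 𝒞, ∑ t : T,
          (M (t, 1) x * ptr ((V x t 1 ⊗ₖ (1 : Matrix Cc Cc ℂ)) *
              Q t ((pT t * κ) • ((1 : Matrix B B ℂ) ⊗ₖ ρΘE x)))).trace) from by
    simp only [Fintype.sum_prod_type, Fin.sum_univ_two, h01, if_false, if_pos rfl,
      eq_self_iff_true, if_true]
    rw [← Finset.sum_add_distrib]
    refine Finset.sum_congr rfl fun x _ => ?_
    rw [← Finset.sum_add_distrib]]
  rw [Complex.add_re]
  have hA0 : (∑ x : 𝒞, ∑ t : T,
      (M (t, 0) x * ((Fintype.card 𝒞 : ℝ)⁻¹ • ∑ θ : 𝒞,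
        ptr ((V θ t 0 ⊗ₖ (1 : Matrix Cc Cc ℂ)) *
          Q t ((pT t * κ) • ((1 : Matrix B B ℂ) ⊗ₖ ρΘE θ))))).trace).re
      ≤ (Fintype.card 𝒞 : ℝ)⁻¹ := by
    rw [Finset.sum_comm, Complex.re_sum]
    have hstep : ∀ t : T, (∑ x : 𝒞,
        (M (t, 0) x * ((Fintype.card 𝒞 : ℝ)⁻¹ • ∑ θ : 𝒞,
          ptr ((V θ t 0 ⊗ₖ (1 : Matrix Cc Cc ℂ)) *
            Q t ((pT t * κ) • ((1 : Matrix B B ℂ) ⊗ₖ ρΘE θ))))).trace).re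
        ≤ (Fintype.card 𝒞 : ℝ)⁻¹ * pT t := by
      intro t
      have h1 : ∑ x : 𝒞, (M (t, 0) x * ((Fintype.card 𝒞 : ℝ)⁻¹ • ∑ θ : 𝒞,
          ptr ((V θ t 0 ⊗ₖ (1 : Matrix Cc Cc ℂ)) *
            Q t ((pT t * κ) • ((1 : Matrix B B ℂ) ⊗ₖ ρΘE θ))))).trace
          = ((Fintype.card 𝒞 : ℝ)⁻¹ • ∑ θ : 𝒞,
          ptr ((V θ t 0 ⊗ₖ (1 : Matrix Cc Cc ℂ)) *
            Q t ((pT t * κ) • ((1 : Matrix B B ℂ) ⊗ₖ ρΘE θ)))).trace := by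
        rw [← Matrix.trace_sum, ← Matrix.sum_mul, (hM (t, 0)).2, Matrix.one_mul]
      rw [h1]
      have h2 : (((Fintype.card 𝒞 : ℝ)⁻¹ • ∑ θ : 𝒞,
          ptr ((V θ t 0 ⊗ₖ (1 : Matrix Cc Cc ℂ)) *
            Q t ((pT t * κ) • ((1 : Matrix B B ℂ) ⊗ₖ ρΘE θ)))).trace).re
          = (Fintype.card 𝒞 : ℝ)⁻¹ *
          (∑ θ : 𝒞, (pT t * κ) * (((V θ t 0 ⊗ₖ (1 : Matrix Cc Cc ℂ)) * Y t θ).trace).re) := by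
        rw [real_smul_matrix, Matrix.trace_smul, smul_eq_mul, Complex.re_ofReal_mul]
        congr 1
        rw [Matrix.trace_sum, Complex.re_sum]
        refine Finset.sum_congr rfl fun θ _ => ?_
        rw [trace_ptr, hQs t θ, Matrix.mul_smul, Matrix.trace_smul, smul_eq_mul,
          Complex.re_ofReal_mul]
      rw [h2]
      have h3 : ∀ θ : 𝒞, (((V θ t 0 ⊗ₖ (1 : Matrix Cc Cc ℂ)) * Y t θ).trace).re
          ≤ (Fintype.card B : ℝ) * ((ρΘE θ).trace).re := by
        intro θ
        have hsub : ((1 : Matrix (B2 × Cc) (B2 × Cc) ℂ)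
            - V θ t 0 ⊗ₖ (1 : Matrix Cc Cc ℂ)).PosSemidef := by
          have hsum := (hV θ t).2
          rw [Fin.sum_univ_two] at hsum
          have h10 : (1 : Matrix B2 B2 ℂ) - V θ t 0 = V θ t 1 := by rw [← hsum]; abel
          have heq : (1 : Matrix (B2 × Cc) (B2 × Cc) ℂ) - V θ t 0 ⊗ₖ (1 : Matrix Cc Cc ℂ)
              = (V θ t 1) ⊗ₖ (1 : Matrix Cc Cc ℂ) := by
            rw [← Matrix.one_kronecker_one, ← sub_kronecker', h10]
          rw [heq]
          exact psd_kronecker ((hV θ t).1 1) Matrix.PosSemidef.one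
        have h := re_trace_mul_mono hsub (hYpsd t θ)
        rwa [Matrix.one_mul, hYtrre t θ] at h
      have h4 : ∑ θ : 𝒞, (pT t * κ) * (((V θ t 0 ⊗ₖ (1 : Matrix Cc Cc ℂ)) * Y t θ).trace).re
          ≤ pT t := by
        have h5 : ∀ θ ∈ (Finset.univ : Finset 𝒞),
            (pT t * κ) * (((V θ t 0 ⊗ₖ (1 : Matrix Cc Cc ℂ)) * Y t θ).trace).re
            ≤ pT t * ((ρΘE θ).trace).re := by
          intro θ _
          calc (pT t * κ) * (((V θ t 0 ⊗ₖ (1 : Matrix Cc Cc ℂ)) * Y t θ).trace).re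
              ≤ (pT t * κ) * ((Fintype.card B : ℝ) * ((ρΘE θ).trace).re) :=
                mul_le_mul_of_nonneg_left (h3 θ) (mul_nonneg (hpT t) hκnn)
            _ = (κ * (Fintype.card B : ℝ)) * (pT t * ((ρΘE θ).trace).re) := by ring
            _ ≤ 1 * (pT t * ((ρΘE θ).trace).re) :=
                mul_le_mul_of_nonneg_right hκB (mul_nonneg (hpT t) (htrnn θ))
            _ = pT t * ((ρΘE θ).trace).re := one_mul _
        calc ∑ θ : 𝒞, (pT t * κ) * (((V θ t 0 ⊗ₖ (1 : Matrix Cc Cc ℂ)) * Y t θ).trace).re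
            ≤ ∑ θ : 𝒞, pT t * ((ρΘE θ).trace).re := Finset.sum_le_sum h5
          _ = pT t := by rw [← Finset.mul_sum, htr1, mul_one]
      exact mul_le_mul_of_nonneg_left h4 (by positivity)
    calc ∑ t : T, (∑ x : 𝒞,
        (M (t, 0) x * ((Fintype.card 𝒞 : ℝ)⁻¹ • ∑ θ : 𝒞,
          ptr ((V θ t 0 ⊗ₖ (1 : Matrix Cc Cc ℂ)) *
            Q t ((pT t * κ) • ((1 : Matrix B B ℂ) ⊗ₖ ρΘE θ))))).trace).re
        ≤ ∑ t : T, (Fintype.card 𝒞 : ℝ)⁻¹ * pT t := Finset.sum_le_sum fun t _ => hstep t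
      _ = (Fintype.card 𝒞 : ℝ)⁻¹ := by rw [← Finset.mul_sum, hpT1, mul_one]
  have hA1 : (∑ x : 𝒞, ∑ t : T,
      (M (t, 1) x * ptr ((V x t 1 ⊗ₖ (1 : Matrix Cc Cc ℂ)) *
          Q t ((pT t * κ) • ((1 : Matrix B B ℂ) ⊗ₖ ρΘE x)))).trace).re
      ≤ guessProb ρΘE := by
    set κc : ℂ := ((κ : ℝ) : ℂ) with hκcdef
    set W : 𝒞 → Matrix E E ℂ := fun x => ∑ t, ((pT t : ℝ) : ℂ) •
      pullW (Q t) (V x t 1 ⊗ₖ M (t, 1) x) κc with hWdef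
    have hA1eq : (∑ x : 𝒞, ∑ t : T,
        (M (t, 1) x * ptr ((V x t 1 ⊗ₖ (1 : Matrix Cc Cc ℂ)) *
            Q t ((pT t * κ) • ((1 : Matrix B B ℂ) ⊗ₖ ρΘE x)))).trace).re
        = ∑ x : 𝒞, ((W x * ρΘE x).trace).re := by
      rw [Complex.re_sum]
      refine Finset.sum_congr rfl fun x _ => ?_
      refine congrArg Complex.re ?_
      simp only [hWdef]
      rw [Matrix.sum_mul, Matrix.trace_sum]
      refine Finset.sum_congr rfl fun t _ => ?_
      rw [Matrix.smul_mul, Matrix.trace_smul, trace_pullW_mul]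
      rw [hQs t x, Matrix.mul_smul, ptr_smul, Matrix.mul_smul, Matrix.trace_smul]
      rw [trace_mul_ptr]
      simp only [hYdef, smul_eq_mul, hκcdef]
      push_cast
      ring
    rw [hA1eq]
    -- quadratic forms of W
    have hWform : ∀ (x : 𝒞) (v : E → ℂ), star v ⬝ᵥ W x *ᵥ v
        = ∑ t, ((pT t : ℝ) : ℂ) * (κc * ((V x t 1 ⊗ₖ M (t, 1) x) *
          Q t ((1 : Matrix B B ℂ) ⊗ₖ Matrix.vecMulVec v (star v))).trace) := by
      intro x v
      rw [form_eq_trace]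
      simp only [hWdef]
      rw [Matrix.sum_mul, Matrix.trace_sum]
      refine Finset.sum_congr rfl fun t _ => ?_
      rw [Matrix.smul_mul, Matrix.trace_smul, trace_pullW_mul, smul_eq_mul]
    have hWre_nonneg : ∀ (x : 𝒞) (v : E → ℂ), 0 ≤ (star v ⬝ᵥ W x *ᵥ v).re := by
      intro x v
      rw [hWform, Complex.re_sum]
      refine Finset.sum_nonneg fun t _ => ?_
      have hG : (V x t 1 ⊗ₖ M (t, 1) x).PosSemidef :=
        psd_kronecker ((hV x t).1 1) ((hM (t, 1)).1 x)
      have hQP : (Q t ((1 : Matrix B B ℂ) ⊗ₖ Matrix.vecMulVec v (star v))).PosSemidef :=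
        cptp_pos (hQ t) (psd_kronecker Matrix.PosSemidef.one (psd_vecMulVec v))
      have h0 := psd_trace_mul_re_nonneg hG hQP
      rw [hκcdef, Complex.re_ofReal_mul, Complex.re_ofReal_mul]
      exact mul_nonneg (hpT t) (mul_nonneg hκnn h0)
    have htrP : ∀ v : E → ℂ, (Matrix.vecMulVec v (star v)).trace = star v ⬝ᵥ v := by
      intro v
      simp [Matrix.trace, Matrix.diag, Matrix.vecMulVec_apply, dotProduct, mul_comm]
    have htrPre : ∀ v : E → ℂ, 0 ≤ ((Matrix.vecMulVec v (star v)).trace).re := fun v =>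
      (Complex.nonneg_iff.mp (psd_trace_nonneg (psd_vecMulVec v))).1
    have hWsum_le : ∀ v : E → ℂ, ∑ x : 𝒞, (star v ⬝ᵥ W x *ᵥ v).re
        ≤ ((Matrix.vecMulVec v (star v)).trace).re := by
      intro v
      set P : Matrix E E ℂ := Matrix.vecMulVec v (star v) with hPdef
      have hforms : ∀ x : 𝒞, (star v ⬝ᵥ W x *ᵥ v).re
          = ∑ t, pT t * (κ * (((V x t 1 ⊗ₖ M (t, 1) x) *
            Q t ((1 : Matrix B B ℂ) ⊗ₖ P)).trace).re) := by
        intro x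
        rw [hWform, Complex.re_sum]
        exact Finset.sum_congr rfl fun t _ => by
          rw [hκcdef, Complex.re_ofReal_mul, Complex.re_ofReal_mul]
      have hstep1 : ∑ x : 𝒞, (star v ⬝ᵥ W x *ᵥ v).re
          = ∑ t : T, pT t * (κ * (((∑ x : 𝒞, V x t 1 ⊗ₖ M (t, 1) x) *
            Q t ((1 : Matrix B B ℂ) ⊗ₖ P)).trace).re) := by
        calc ∑ x : 𝒞, (star v ⬝ᵥ W x *ᵥ v).re
            = ∑ x : 𝒞, ∑ t, pT t * (κ * (((V x t 1 ⊗ₖ M (t, 1) x) *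
              Q t ((1 : Matrix B B ℂ) ⊗ₖ P)).trace).re) :=
              Finset.sum_congr rfl fun x _ => hforms x
          _ = ∑ t, ∑ x : 𝒞, pT t * (κ * (((V x t 1 ⊗ₖ M (t, 1) x) *
              Q t ((1 : Matrix B B ℂ) ⊗ₖ P)).trace).re) := Finset.sum_comm
          _ = _ := by
              refine Finset.sum_congr rfl fun t _ => ?_
              simp only [Matrix.sum_mul, Matrix.trace_sum, Complex.re_sum, Finset.mul_sum]
      rw [hstep1]
      have hbound : ∀ t : T, (((∑ x : 𝒞, V x t 1 ⊗ₖ M (t, 1) x) *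
          Q t ((1 : Matrix B B ℂ) ⊗ₖ P)).trace).re
          ≤ (Fintype.card B : ℝ) * (P.trace).re := by
        intro t
        have hQP : (Q t ((1 : Matrix B B ℂ) ⊗ₖ P)).PosSemidef :=
          cptp_pos (hQ t) (psd_kronecker Matrix.PosSemidef.one (psd_vecMulVec v))
        have hone : (1 : Matrix (B2 × Cc) (B2 × Cc) ℂ)
            = ∑ x : 𝒞, (1 : Matrix B2 B2 ℂ) ⊗ₖ M (t, 1) x := by
          rw [← kronecker_sum_right, (hM (t, 1)).2, Matrix.one_kronecker_one]
        have hsub : ((1 : Matrix (B2 × Cc) (B2 × Cc) ℂ)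
            - ∑ x : 𝒞, V x t 1 ⊗ₖ M (t, 1) x).PosSemidef := by
          have heq : (1 : Matrix (B2 × Cc) (B2 × Cc) ℂ)
              - ∑ x : 𝒞, V x t 1 ⊗ₖ M (t, 1) x
              = ∑ x : 𝒞, (V x t 0 ⊗ₖ M (t, 1) x) := by
            rw [hone, ← Finset.sum_sub_distrib]
            refine Finset.sum_congr rfl fun x _ => ?_
            rw [← sub_kronecker']
            have hsum := (hV x t).2
            rw [Fin.sum_univ_two] at hsum
            have h10 : (1 : Matrix B2 B2 ℂ) - V x t 1 = V x t 0 := by rw [← hsum]; abel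
            rw [h10]
          rw [heq]
          exact psd_sum _ _ fun x _ =>
            psd_kronecker ((hV x t).1 0) ((hM (t, 1)).1 x)
        have h := re_trace_mul_mono hsub hQP
        rw [Matrix.one_mul] at h
        have htr : ((Q t ((1 : Matrix B B ℂ) ⊗ₖ P)).trace).re
            = (Fintype.card B : ℝ) * (P.trace).re := by
          rw [(hQ t).2, Matrix.trace_kronecker, Matrix.trace_one]
          rw [show ((Fintype.card B : ℂ)) = (((Fintype.card B : ℝ)) : ℂ) by push_cast; rfl]
          exact Complex.re_ofReal_mul _ _
        rwa [htr] at h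
      calc ∑ t : T, pT t * (κ * (((∑ x : 𝒞, V x t 1 ⊗ₖ M (t, 1) x) *
            Q t ((1 : Matrix B B ℂ) ⊗ₖ P)).trace).re)
          ≤ ∑ t : T, pT t * (P.trace).re := by
            refine Finset.sum_le_sum fun t _ => ?_
            have hnn : 0 ≤ (((∑ x : 𝒞, V x t 1 ⊗ₖ M (t, 1) x) *
                Q t ((1 : Matrix B B ℂ) ⊗ₖ P)).trace).re :=
              psd_trace_mul_re_nonneg (psd_sum _ _ fun x _ =>
                psd_kronecker ((hV x t).1 1) ((hM (t, 1)).1 x))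
                (cptp_pos (hQ t) (psd_kronecker Matrix.PosSemidef.one (psd_vecMulVec v)))
            calc pT t * (κ * (((∑ x : 𝒞, V x t 1 ⊗ₖ M (t, 1) x) *
                  Q t ((1 : Matrix B B ℂ) ⊗ₖ P)).trace).re)
                ≤ pT t * (κ * ((Fintype.card B : ℝ) * (P.trace).re)) :=
                  mul_le_mul_of_nonneg_left
                    (mul_le_mul_of_nonneg_left (hbound t) hκnn) (hpT t)
              _ = (κ * (Fintype.card B : ℝ)) * (pT t * (P.trace).re) := by ring
              _ ≤ 1 * (pT t * (P.trace).re) :=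
                  mul_le_mul_of_nonneg_right hκB (mul_nonneg (hpT t) (htrPre v))
              _ = pT t * (P.trace).re := one_mul _
        _ = (P.trace).re := by rw [← Finset.sum_mul, hpT1, one_mul]
    -- the POVM built from the Hermitian parts of `W` plus a slack outcome
    have hHermPSD : ∀ x : 𝒞, (hermPart (W x)).PosSemidef := by
      intro x
      refine Matrix.PosSemidef.of_dotProduct_mulVec_nonneg (hermPart_isHermitian _) fun v => ?_
      rw [form_hermPart]
      exact Complex.zero_le_real.mpr (hWre_nonneg x v)
    set S : Matrix E E ℂ := 1 - ∑ x : 𝒞, hermPart (W x) with hSdef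
    have hSHerm : S.IsHermitian := by
      rw [hSdef]
      exact Matrix.isHermitian_one.sub (isHermitian_sum _ _ fun x _ => hermPart_isHermitian _)
    have hSpsd : S.PosSemidef := by
      refine Matrix.PosSemidef.of_dotProduct_mulVec_nonneg hSHerm fun v => ?_
      rw [hermitian_form_real hSHerm v, Complex.zero_le_real, form_eq_trace]
      have hexp : ((S * Matrix.vecMulVec v (star v)).trace).re
          = ((Matrix.vecMulVec v (star v)).trace).re
            - ∑ x : 𝒞, ((hermPart (W x) * Matrix.vecMulVec v (star v)).trace).re := by
        rw [hSdef, Matrix.sub_mul, Matrix.one_mul, Matrix.sum_mul, Matrix.trace_sub,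
          Matrix.trace_sum, Complex.sub_re, Complex.re_sum]
      rw [hexp]
      have h2 : ∀ x : 𝒞, ((hermPart (W x) * Matrix.vecMulVec v (star v)).trace).re
          = (star v ⬝ᵥ W x *ᵥ v).re := by
        intro x
        rw [trace_hermPart_mul_re (psd_vecMulVec v).1, ← form_eq_trace]
      rw [Finset.sum_congr rfl fun x _ => h2 x]
      have h3 := hWsum_le v
      linarith
    have hN : IsPOVM (fun x : 𝒞 => hermPart (W x) + if x = θ₀ then S else 0) := by
      constructor
      · intro x
        dsimp only
        by_cases hx : x = θ₀
        · rw [if_pos hx]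
          exact (hHermPSD x).add hSpsd
        · rw [if_neg hx, add_zero]
          exact hHermPSD x
      · rw [Finset.sum_add_distrib]
        rw [Finset.sum_ite_eq' Finset.univ θ₀ fun _ => S]
        rw [if_pos (Finset.mem_univ θ₀), hSdef]
        abel
    have hval : ∑ x : 𝒞, ((W x * ρΘE x).trace).re
        ≤ (∑ x : 𝒞, ((hermPart (W x) + if x = θ₀ then S else 0) * ρΘE x).trace).re := by
      rw [Complex.re_sum]
      refine Finset.sum_le_sum fun x _ => ?_
      rw [Matrix.add_mul, Matrix.trace_add, Complex.add_re]
      rw [trace_hermPart_mul_re (hρ1 x).1]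
      by_cases hx : x = θ₀
      · rw [if_pos hx]
        have := psd_trace_mul_re_nonneg hSpsd (hρ1 x)
        linarith
      · rw [if_neg hx]
        simp
    calc ∑ x : 𝒞, ((W x * ρΘE x).trace).re
        ≤ (∑ x : 𝒞, ((hermPart (W x) + if x = θ₀ then S else 0) * ρΘE x).trace).re := hval
      _ ≤ guessProb ρΘE :=
          le_csSup (guessProb_bddAbove hρ)
            ⟨fun x => hermPart (W x) + if x = θ₀ then S else 0, hN, rfl⟩
  exact add_le_add hA0 hA1
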